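/- Let p, q be distinct odd primes and r, s, x, t positive integers with x > p and p ≥ 3. There are no such integers satisfying both p^r + q^s - 1 = p^{rx-1} and ((p^r+q^s)^p - 1)/(p^r+q^s-1) = p·q^t with q ≡ 1 (mod 2p). -/

import Mathlib

private lemma aux_4m (m : ℕ) : 4 * m + 2 ≤ 3 ^ (m + 1) := by
  induction m with
  | zero => norm_num
  | succ n ih =>
    have h3 : 3 ≤ 3 ^ (n + 1) := Nat.le_self_pow (by omega) 3
    have : 3 ^ (n + 2) = 3 * 3 ^ (n + 1) := by ring
    omega

private lemma aux_pow_mod (P : ℕ) (i : ℕ) :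
    (P + 1) ^ i ≡ 1 + i * P [MOD P ^ 2] ∧ 1 + i * P ≤ (P + 1) ^ i := by
  induction i with
  | zero => simp; rfl
  | succ n ih =>
    constructor
    · have h1 : (P + 1) ^ (n + 1) ≡ (1 + n * P) * (P + 1) [MOD P ^ 2] := by
        rw [pow_succ]; exact ih.1.mul_right _
      have h2 : (1 + n * P) * (P + 1) = (1 + (n + 1) * P) + n * P ^ 2 := by ring
      have h3 : (1 + (n + 1) * P) + n * P ^ 2 ≡ 1 + (n + 1) * P [MOD P ^ 2] := by
        show (_ + _ * _) % _ = _ % _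
        exact Nat.add_mul_mod_self_right _ _ _
      exact h1.trans (h2 ▸ h3)
    · have hb : (1 + n * P) * (P + 1) ≤ (P + 1) ^ (n + 1) := by
        rw [pow_succ]; exact Nat.mul_le_mul_right _ ih.2
      calc 1 + (n + 1) * P ≤ (1 + (n + 1) * P) + n * (P * P) := Nat.le_add_right _ _
        _ = (1 + n * P) * (P + 1) := by ring
        _ ≤ (P + 1) ^ (n + 1) := hb

private lemma aux_sum_mod (P n : ℕ) :
    (∑ i ∈ Finset.range n, (P + 1) ^ i) ≡ (∑ i ∈ Finset.range n, (1 + i * P)) [MOD P ^ 2] ∧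
    (∑ i ∈ Finset.range n, (1 + i * P)) ≤ ∑ i ∈ Finset.range n, (P + 1) ^ i := by
  induction n with
  | zero => exact ⟨Nat.ModEq.rfl, le_refl _⟩
  | succ n ih =>
    rw [Finset.sum_range_succ, Finset.sum_range_succ]
    exact ⟨ih.1.add (aux_pow_mod P n).1, Nat.add_le_add ih.2 (aux_pow_mod P n).2⟩

theorem stmt_15 (p q r s x t : ℕ) (hp : p.Prime) (hpodd : Odd p)
    (hq : q.Prime) (hqodd : Odd q) (hpq : p ≠ q)
    (hr : 0 < r) (hs : 0 < s) (ht : 0 < t) (hx : x > p)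
    (hqmod : q ≡ 1 [MOD 2 * p])
    (h1 : p ^ r + q ^ s - 1 = p ^ (r * x - 1))
    (h2 : ∑ i ∈ Finset.range p, (p ^ r + q ^ s) ^ i = p * q ^ t) : False := by
  haveI : Fact p.Prime := ⟨hp⟩
  have hp2 : 2 ≤ p := hp.two_le
  obtain ⟨h, hph⟩ : ∃ h, p = 2 * h + 1 := id hpodd
  have hp3 : 3 ≤ p := by omega
  have hq1 : 1 < q := hq.one_lt
  have hdvd : 2 * p ∣ q - 1 := (Nat.modEq_iff_dvd' (by omega)).mp hqmod.symm
  have hpq1 : p ∣ q - 1 := dvd_trans (dvd_mul_left p 2) hdvd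
  have hq2p : 2 * p + 1 ≤ q := by
    have := Nat.le_of_dvd (by omega) hdvd
    omega
  have hqgtp : p < q := by omega
  have hndvd : ¬ p ∣ q := fun hd => hpq ((Nat.prime_dvd_prime_iff_eq hp hq).mp hd)
  set e := r * x - 1 with hedef
  have hxe : x ≤ r * x := Nat.le_mul_of_pos_left x hr
  have hrx4 : 4 * r ≤ r * x := by
    have h4 : 4 ≤ x := by omega
    calc 4 * r = r * 4 := by ring
      _ ≤ r * x := Nat.mul_le_mul_left r h4
  have her : r + 2 ≤ e := by omega
  have hep : p ≤ e := by omega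
  have hpr1 : 1 ≤ p ^ r := Nat.one_le_pow _ _ (by omega)
  have hqs1 : 1 ≤ q ^ s := Nat.one_le_pow _ _ (by omega)
  have hE : p ^ r + q ^ s = p ^ e + 1 := by omega
  -- q^s = 1 + p^r * B with p ∤ B
  have h1le : 1 ≤ p ^ (e - r) := Nat.one_le_pow _ _ (by omega)
  obtain ⟨B, hB⟩ : ∃ B, p ^ (e - r) = B + 1 := ⟨p ^ (e - r) - 1, by omega⟩
  have hkey : p ^ r * B + p ^ r = p ^ e := by
    have hmm : p ^ r * (B + 1) = p ^ e := by
      rw [← hB, ← pow_add]; congr 1; omega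
    rw [Nat.mul_add, mul_one] at hmm; exact hmm
  have hqsB : q ^ s = 1 + p ^ r * B := by omega
  have hpB : ¬ p ∣ B := by
    intro hdB
    have hd1 : p ∣ B + 1 := hB ▸ dvd_pow_self p (by omega)
    have hone : p ∣ 1 := by
      have := Nat.dvd_sub hd1 hdB
      simpa using this
    have := Nat.le_of_dvd one_pos hone
    omega
  have hBp : p ≤ p ^ (e - r) := Nat.le_self_pow (by omega) p
  have hBne : B ≠ 0 := by omega
  -- valuation of q^s - 1
  have hvqs : padicValNat p (q ^ s - 1) = r := by
    have : q ^ s - 1 = p ^ r * B := by omega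
    rw [this, padicValNat.mul (pow_ne_zero r (by omega)) hBne,
      padicValNat.prime_pow, padicValNat.eq_zero_of_not_dvd hpB]
    omega
  have hLTEs : padicValNat p (q ^ s - 1 ^ s) =
      padicValNat p (q - 1) + padicValNat p s :=
    padicValNat.pow_sub_pow hpodd hq1 (by simpa using hpq1) hndvd hs.ne'
  rw [one_pow, hvqs] at hLTEs
  set a := padicValNat p (q - 1) with hadef
  have har : a ≤ r := by omega
  -- the sum congruence: p * q^t = p + (p*h)*P + P^2*K
  rw [hE] at h2
  obtain ⟨hmod, hle⟩ := aux_sum_mod (p ^ e) p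
  have hTsum : (∑ i ∈ Finset.range p, (1 + i * p ^ e)) =
      p + (∑ i ∈ Finset.range p, i) * p ^ e := by
    rw [Finset.sum_add_distrib, Finset.sum_const, Finset.card_range, smul_eq_mul, mul_one,
      ← Finset.sum_mul]
  have hgauss : (∑ i ∈ Finset.range p, i) = p * h := by
    have hg := Finset.sum_range_id_mul_two p
    have hp1 : p - 1 = 2 * h := by omega
    rw [hp1] at hg
    have : p * (2 * h) = (p * h) * 2 := by ring
    omega
  have hdiv : (p ^ e) ^ 2 ∣ (∑ i ∈ Finset.range p, (p ^ e + 1) ^ i) -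
      (∑ i ∈ Finset.range p, (1 + i * p ^ e)) := (Nat.modEq_iff_dvd' hle).mp hmod.symm
  obtain ⟨K, hK⟩ := hdiv
  have hSK : p * q ^ t = (p + (p * h) * p ^ e) + (p ^ e) ^ 2 * K := by
    rw [← h2, ← hgauss, ← hTsum]
    omega
  -- q^t = 1 + p^e * B2 with p ∤ B2
  have hQ : p ^ e = p * p ^ (e - 1) := by
    rw [← pow_succ']; congr 1; omega
  set Q := p ^ (e - 1) with hQdef
  have hqtB : q ^ t = 1 + p ^ e * (h + Q * K) := by
    have hcalc : p * q ^ t = p * (1 + p ^ e * (h + Q * K)) := by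
      rw [hSK, hQ]; ring
    exact Nat.eq_of_mul_eq_mul_left (by omega) hcalc
  have hpB2 : ¬ p ∣ (h + Q * K) := by
    intro hd
    have hdQ : p ∣ Q * K := Dvd.dvd.mul_right (dvd_pow_self p (by omega)) K
    have hdh : p ∣ h := by
      have := Nat.dvd_sub hd hdQ
      simpa using this
    have := Nat.le_of_dvd (by omega) hdh
    omega
  have hB2ne : h + Q * K ≠ 0 := by omega
  have hvqt : padicValNat p (q ^ t - 1) = e := by
    have : q ^ t - 1 = p ^ e * (h + Q * K) := by omega
    rw [this, padicValNat.mul (pow_ne_zero e (by omega)) hB2ne,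
      padicValNat.prime_pow, padicValNat.eq_zero_of_not_dvd hpB2]
    omega
  have hLTEt : padicValNat p (q ^ t - 1 ^ t) =
      padicValNat p (q - 1) + padicValNat p t :=
    padicValNat.pow_sub_pow hpodd hq1 (by simpa using hpq1) hndvd ht.ne'
  rw [one_pow, hvqt, ← hadef] at hLTEt
  -- t ≥ p^(e-a)
  have hvt : padicValNat p t = e - a := by omega
  have htge : p ^ (e - a) ≤ t := by
    have hd : p ^ (e - a) ∣ t := hvt ▸ pow_padicValNat_dvd
    exact Nat.le_of_dvd ht hd
  -- upper bound : t < s * p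
  have hN1 : 1 ≤ p ^ e + 1 := by omega
  have hsumle : p * q ^ t ≤ p * (p ^ e + 1) ^ (p - 1) := by
    rw [← h2]
    calc (∑ i ∈ Finset.range p, (p ^ e + 1) ^ i)
        ≤ ∑ i ∈ Finset.range p, (p ^ e + 1) ^ (p - 1) :=
          Finset.sum_le_sum (fun i hi => Nat.pow_le_pow_right hN1
            (by have := Finset.mem_range.mp hi; omega))
      _ = p * (p ^ e + 1) ^ (p - 1) := by
          rw [Finset.sum_const, Finset.card_range, smul_eq_mul]
  have hqtle : q ^ t ≤ (p ^ e + 1) ^ (p - 1) :=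
    Nat.le_of_mul_le_mul_left hsumle (by omega)
  have hprqs : p ^ r ≤ q ^ s := by
    have : p ^ r ≤ p ^ r * B := Nat.le_mul_of_pos_right _ (by omega)
    omega
  have hNle : p ^ e + 1 ≤ 2 * q ^ s := by omega
  have hqtle2 : q ^ t ≤ 2 ^ (p - 1) * (q ^ s) ^ (p - 1) := by
    calc q ^ t ≤ (p ^ e + 1) ^ (p - 1) := hqtle
      _ ≤ (2 * q ^ s) ^ (p - 1) := Nat.pow_le_pow_left hNle _
      _ = 2 ^ (p - 1) * (q ^ s) ^ (p - 1) := mul_pow 2 (q ^ s) (p - 1)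
  -- 2^(p-1) < q^s
  have hQB : p ^ (e - r - 1) ≤ B := by
    have h1' : p ^ (e - r) = p * p ^ (e - r - 1) := by
      rw [← pow_succ']; congr 1; omega
    have h2' : 3 * p ^ (e - r - 1) ≤ p * p ^ (e - r - 1) :=
      Nat.mul_le_mul_right _ hp3
    have h3' : 1 ≤ p ^ (e - r - 1) := Nat.one_le_pow _ _ (by omega)
    omega
  have hqse1 : p ^ (e - 1) ≤ q ^ s := by
    have h1' : p ^ r * p ^ (e - r - 1) ≤ p ^ r * B := Nat.mul_le_mul_left _ hQB
    have h2' : p ^ r * p ^ (e - r - 1) = p ^ (e - 1) := by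
      rw [← pow_add]; congr 1; omega
    omega
  have h2q : 2 ^ (p - 1) < q ^ s := by
    have ha1 : (2 : ℕ) ^ (p - 1) < 3 ^ (p - 1) :=
      Nat.pow_lt_pow_left (by norm_num) (by omega)
    have ha2 : (3 : ℕ) ^ (p - 1) ≤ p ^ (p - 1) := Nat.pow_le_pow_left hp3 _
    have ha3 : p ^ (p - 1) ≤ p ^ (e - 1) := Nat.pow_le_pow_right (by omega) (by omega)
    omega
  have hqt_lt : q ^ t < q ^ (s * p) := by
    have hpos : 0 < (q ^ s) ^ (p - 1) := pow_pos (by omega) _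
    have hchain : q ^ t < q ^ s * (q ^ s) ^ (p - 1) := by
      calc q ^ t ≤ 2 ^ (p - 1) * (q ^ s) ^ (p - 1) := hqtle2
        _ < q ^ s * (q ^ s) ^ (p - 1) := (Nat.mul_lt_mul_right hpos).mpr h2q
    have hid : q ^ s * (q ^ s) ^ (p - 1) = q ^ (s * p) := by
      rw [← pow_succ']
      rw [← pow_mul]
      congr 1
      have : p - 1 + 1 = p := by omega
      rw [this]
    omega
  have htsp : t < s * p := by
    exact (Nat.pow_lt_pow_iff_right hq1).mp hqt_lt
  -- final contradiction
  have hm1 : p ^ (e - a) = p ^ (e - 1 - a) * p := by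
    rw [← pow_succ]; congr 1; omega
  have hms : p ^ (e - 1 - a) < s := by
    have : p ^ (e - 1 - a) * p < s * p := by omega
    exact Nat.lt_of_mul_lt_mul_right this
  set m := e - 1 - a with hmdef
  have h3m : m + a ≤ 3 ^ m := by
    have hb1 : 3 * a ≤ m + 2 := by omega
    have hb2 : 4 * m + 2 ≤ 3 ^ (m + 1) := aux_4m m
    have hb3 : 3 ^ (m + 1) = 3 * 3 ^ m := by ring
    have : 3 * (m + a) ≤ 3 * 3 ^ m := by omega
    omega
  have hpm : 3 ^ m ≤ p ^ m := Nat.pow_le_pow_left hp3 m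
  have hse : e ≤ s := by omega
  have hc1 : q ^ e ≤ q ^ s := Nat.pow_le_pow_right (by omega) hse
  have hc2 : p ^ e < q ^ e := Nat.pow_lt_pow_left hqgtp (by omega)
  have hc3 : q ^ s ≤ p ^ e := by omega
  omega
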